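/- Let G be a partial cube, H a gated subgraph of G, v a vertex of G, and v' the gate of v in H. Then no shortest (v,v')-path of G contains an edge whose Θ-class contains an edge of H. -/

import Mathlib

open Finset
open scoped Classical

variable {U : Type*}

/-- Hamming distance between two vertices of the hypercube `U → Bool`. -/
def hDist [Fintype U] [DecidableEq U] (x y : U → Bool) : ℕ :=
  (Finset.univ.filter fun i => x i ≠ y i).card

/-- The hypercube graph on `U → Bool`: two vertices are adjacent iff they differ
in exactly one coordinate. -/
def cubeGraph (U : Type*) [Fintype U] [DecidableEq U] : SimpleGraph (U → Bool) where
  Adj x y := hDist x y = 1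
  symm := by
    constructor
    intro x y h
    have hs : (Finset.univ.filter fun i => y i ≠ x i) =
        (Finset.univ.filter fun i => x i ≠ y i) := by
      apply Finset.filter_congr
      intro i _
      exact ne_comm
    simpa [hDist, hs] using h
  loopless := by
    constructor
    intro x h
    simp [hDist] at h

/-- Distance between `x` and `y` inside the subgraph of the hypercube induced by `A`
(`0` if one of them is not in `A`). -/
noncomputable def dIn [Fintype U] [DecidableEq U] (A : Set (U → Bool)) (x y : U → Bool) : ℕ :=
  if h : x ∈ A ∧ y ∈ A then ((cubeGraph U).induce A).dist ⟨x, h.1⟩ ⟨y, h.2⟩ else 0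

/-- A set of vertices of the hypercube is a partial cube if its induced graph is connected
and the induced graph distance coincides with the Hamming distance
(i.e. it is an isometric subgraph of the hypercube). -/
def IsPartialCube [Fintype U] [DecidableEq U] (A : Set (U → Bool)) : Prop :=
  ((cubeGraph U).induce A).Connected ∧ ∀ x ∈ A, ∀ y ∈ A, dIn A x y = hDist x y

/-- `A` shatters the coordinate set `X`. -/
def Shatters [Fintype U] [DecidableEq U] (A : Set (U → Bool)) (X : Finset U) : Prop :=
  ∀ g : U → Bool, ∃ a ∈ A, ∀ i ∈ X, a i = g i

/-- `A` strongly shatters `X`: it contains a full subcube over the coordinates `X`. -/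
def StronglyShatters [Fintype U] [DecidableEq U] (A : Set (U → Bool)) (X : Finset U) : Prop :=
  ∃ a : U → Bool, ∀ g : U → Bool, (fun i => if i ∈ X then g i else a i) ∈ A

/-- An ample set family: every shattered set is strongly shattered. -/
def IsAmple [Fintype U] [DecidableEq U] (A : Set (U → Bool)) : Prop :=
  ∀ X : Finset U, Shatters A X → StronglyShatters A X

/-- The set of coordinates in which the two endpoints of an edge of the hypercube differ. -/
def diffCoords [DecidableEq U] : Sym2 (U → Bool) → Set U :=
  Sym2.lift ⟨fun x y => {i | x i ≠ y i}, fun x y => by ext i; exact ne_comm⟩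

lemma hDist_subset [Fintype U] [DecidableEq U] (x y z : U → Bool) :
    (Finset.univ.filter fun i => x i ≠ z i) ⊆
      (Finset.univ.filter fun i => x i ≠ y i) ∪ (Finset.univ.filter fun i => y i ≠ z i) := by
  intro i hi
  simp only [Finset.mem_filter, Finset.mem_union, Finset.mem_univ, true_and] at *
  by_contra h
  push_neg at h
  exact hi (h.1.trans h.2)

lemma hDist_triangle [Fintype U] [DecidableEq U] (x y z : U → Bool) :
    hDist x z ≤ hDist x y + hDist y z :=
  (Finset.card_le_card (hDist_subset x y z)).trans (Finset.card_union_le _ _)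

lemma hDist_self [Fintype U] [DecidableEq U] (x : U → Bool) : hDist x x = 0 := by
  simp [hDist]

lemma hDist_flip [Fintype U] [DecidableEq U] {a b y : U → Bool} {i : U}
    (hab : hDist a b = 1) (hi : a i ≠ b i) (hay : a i = y i) :
    hDist b y = hDist a y + 1 := by
  have hsing : (Finset.univ.filter fun j => a j ≠ b j) = {i} := by
    apply Finset.eq_singleton_iff_unique_mem.mpr
    constructor
    · simp [hi]
    · intro j hj
      rcases Finset.card_eq_one.mp hab with ⟨k, hk⟩
      rw [hk] at hj
      have hik : i ∈ ({k} : Finset U) := by rw [← hk]; simp [hi]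
      simp only [Finset.mem_singleton] at hj hik
      rw [hj, hik]
  have hagree : ∀ j, j ≠ i → a j = b j := by
    intro j hji
    by_contra h
    have : j ∈ (Finset.univ.filter fun j => a j ≠ b j) := by simp [h]
    rw [hsing] at this
    exact hji (Finset.mem_singleton.mp this)
  have hset : (Finset.univ.filter fun j => b j ≠ y j) =
      insert i (Finset.univ.filter fun j => a j ≠ y j) := by
    ext j
    simp only [Finset.mem_filter, Finset.mem_insert, Finset.mem_univ, true_and]
    by_cases hji : j = i
    · subst hji
      constructor
      · intro _; left; rfl
      · intro _
        rw [← hay]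
        exact fun h => hi h.symm
    · rw [hagree j hji]
      constructor
      · intro h; right; exact h
      · rintro (h | h)
        · exact absurd h hji
        · exact h
  have hnotmem : i ∉ (Finset.univ.filter fun j => a j ≠ y j) := by simp [hay]
  unfold hDist
  rw [hset, Finset.card_insert_of_notMem hnotmem, Nat.add_comm]

lemma walk_len_ge [Fintype U] [DecidableEq U] (A : Set (U → Bool)) {x y : ↥A}
    (p : ((cubeGraph U).induce A).Walk x y) : hDist x.val y.val ≤ p.length := by
  induction p with
  | nil => simp [hDist_self]
  | @cons a b c h q ih =>
    have hab : hDist a.val b.val = 1 := h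
    calc hDist a.val c.val ≤ hDist a.val b.val + hDist b.val c.val := hDist_triangle _ _ _
      _ ≤ 1 + q.length := by rw [hab]; omega
      _ = (SimpleGraph.Walk.cons h q).length := by simp [SimpleGraph.Walk.length_cons]; omega

lemma walk_key [Fintype U] [DecidableEq U] (A : Set (U → Bool)) {x y : ↥A}
    (p : ((cubeGraph U).induce A).Walk x y) (i : U) (hxy : x.val i = y.val i)
    (e : Sym2 ↥A) (he : e ∈ p.edges)
    (hie : i ∈ diffCoords (e.map (Subtype.val : ↥A → U → Bool))) :
    hDist x.val y.val + 1 ≤ p.length := by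
  induction p with
  | nil => simp at he
  | @cons a b c h q ih =>
    have hab : hDist a.val b.val = 1 := h
    rw [SimpleGraph.Walk.edges_cons, List.mem_cons] at he
    by_cases hbc : b.val i = c.val i
    · rcases he with he | he
      ·
        subst he
        simp only [Sym2.map_pair_eq, diffCoords, Sym2.lift_mk, Set.mem_setOf_eq] at hie
        have : hDist b.val c.val = hDist a.val c.val + 1 :=
          hDist_flip hab hie hxy
        have hq := walk_len_ge A q
        rw [SimpleGraph.Walk.length_cons]
        omega
      · have := ih (hbc.trans (hxy ▸ rfl) |>.trans rfl) he
        have htri : hDist a.val c.val ≤ 1 + hDist b.val c.val := by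
          have := hDist_triangle a.val b.val c.val
          omega
        rw [SimpleGraph.Walk.length_cons]
        omega
    · -- b i ≠ c i, and a i = c i, so a i ≠ b i
      have hai : a.val i ≠ b.val i := fun h' => hbc (h' ▸ hxy)
      have hflip : hDist b.val c.val = hDist a.val c.val + 1 :=
        hDist_flip hab hai hxy
      have hq := walk_len_ge A q
      rw [SimpleGraph.Walk.length_cons]
      omega

/-- Let `S` be a partial cube, `H` a gated subgraph of `S`, `v` a vertex
and `v'` the gate of `v` in `H`.  Then no shortest `(v,v')`-path contains an edge whose
Θ-class (differing coordinate) contains an edge of `H`. -/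
theorem stmt2 [Fintype U] [DecidableEq U] (S H : Set (U → Bool)) (hpc : IsPartialCube S)
    (hHS : H ⊆ S)
    (hgated : ∀ w ∈ S, ∃ g ∈ H, ∀ y ∈ H, dIn S w y = dIn S w g + dIn S g y)
    (v : U → Bool) (hv : v ∈ S) (v' : U → Bool) (hv'H : v' ∈ H)
    (hgate : ∀ y ∈ H, dIn S v y = dIn S v v' + dIn S v' y)
    (p : ((cubeGraph U).induce S).Walk ⟨v, hv⟩ ⟨v', hHS hv'H⟩)
    (hshort : p.length = dIn S v v') :
    ∀ e ∈ p.edges, ∀ i ∈ diffCoords (e.map (Subtype.val : ↥S → U → Bool)),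
      ¬ ∃ h₁ ∈ H, ∃ h₂ ∈ H, hDist h₁ h₂ = 1 ∧ h₁ i ≠ h₂ i := by
  intro e he i hi
  rintro ⟨h₁, hh₁, h₂, hh₂, -, hne⟩
  have hlen : p.length = hDist v v' := by
    rw [hshort, hpc.2 v hv v' (hHS hv'H)]
  -- pick h ∈ H with h i = v i
  obtain ⟨h, hhH, hhi⟩ : ∃ h ∈ H, h i = v i := by
    by_cases h1 : h₁ i = v i
    · exact ⟨h₁, hh₁, h1⟩
    · refine ⟨h₂, hh₂, ?_⟩
      revert hne h1
      cases h₁ i <;> cases h₂ i <;> cases v i <;> simp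
  -- gate equation in Hamming distance
  have hgateh : hDist v h = hDist v v' + hDist v' h := by
    have := hgate h hhH
    rwa [hpc.2 v hv h (hHS hhH), hpc.2 v hv v' (hHS hv'H),
      hpc.2 v' (hHS hv'H) h (hHS hhH)] at this
  -- v i = v' i
  have hvv' : v i = v' i := by
    by_contra hvv
    set A := Finset.univ.filter fun j => v j ≠ v' j with hA
    set B := Finset.univ.filter fun j => v' j ≠ h j with hB
    set C := Finset.univ.filter fun j => v j ≠ h j with hC
    have hiA : i ∈ A := by simp [hA, hvv]
    have hiC : i ∉ C := by simp [hC, hhi.symm]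
    have hsub : C ⊆ (A ∪ B).erase i := by
      intro j hj
      rw [Finset.mem_erase]
      refine ⟨fun hji => hiC (hji ▸ hj), hDist_subset v v' h hj⟩
    have h1 : C.card ≤ (A ∪ B).card - 1 := by
      have := Finset.card_le_card hsub
      rwa [Finset.card_erase_of_mem (Finset.mem_union_left _ hiA)] at this
    have h2 : (A ∪ B).card ≤ A.card + B.card := Finset.card_union_le _ _
    have h3 : 1 ≤ A.card := Finset.card_pos.mpr ⟨i, hiA⟩
    have hge : C.card = A.card + B.card := hgateh
    omega
  -- contradiction with the key walk lemma
  have hk : hDist v v' + 1 ≤ p.length := walk_key S p i hvv' e he hi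
  omega
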